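/- arXiv:1507.05879 — 4 statements merged into one kernel-verified Lean document; each statement's English description precedes it below -/
import Mathlib

section
/- Let a, c be complex numbers with c not a nonpositive integer, and let x, y be complex numbers with |x| + |y| < 1/4. Then ∑_{m,n ≥ 0} (a)_{2m+2n} x^m y^n / ((c)_{m+n} m! n!) = F(a/2, (a+1)/2; c; 4(x+y)). -/
noncomputable def poch (a : ℂ) : ℕ → ℂ
  | 0 => 1
  | n + 1 => poch a n * (a + n)

noncomputable def hyp (α β γ z : ℂ) : ℂ :=
  ∑' n : ℕ, poch α n * poch β n / (poch γ n * (Nat.factorial n : ℂ)) * z ^ n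

open Filter Finset

lemma poch_succ (a : ℂ) (n : ℕ) : poch a (n+1) = poch a n * (a + n) := rfl

lemma poch_dup (a : ℂ) (n : ℕ) :
    poch a (2*n) = 4^n * poch (a/2) n * poch ((a+1)/2) n := by
  induction n with
  | zero => simp [poch]
  | succ n ih =>
    have h2 : 2*(n+1) = (2*n+1)+1 := by ring
    rw [h2, poch_succ, poch_succ, poch_succ, poch_succ, ih]
    push_cast
    ring

lemma antidiagonal_pow_sum {K : Type*} [Field K] [CharZero K] (x y : K) (N : ℕ) :
    ∑ ij ∈ Finset.HasAntidiagonal.antidiagonal N, x ^ ij.1 * y ^ ij.2 / ((ij.1.factorial : K) * ij.2.factorial)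
      = (x + y) ^ N / N.factorial := by
  rw [Finset.Nat.sum_antidiagonal_eq_sum_range_succ_mk, add_pow, Finset.sum_div]
  refine Finset.sum_congr rfl fun k hk => ?_
  have hk' : k ≤ N := Nat.lt_succ_iff.mp (Finset.mem_range.mp hk)
  have h := Nat.choose_mul_factorial_mul_factorial hk'
  have hh : ((N.choose k : K)) * k.factorial * (N-k).factorial = N.factorial := by
    exact_mod_cast congrArg (Nat.cast : ℕ → K) h
  have h1 : (k.factorial : K) ≠ 0 := Nat.cast_ne_zero.mpr (Nat.factorial_ne_zero k)
  have h2 : ((N-k).factorial : K) ≠ 0 := Nat.cast_ne_zero.mpr (Nat.factorial_ne_zero _)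
  have h3 : (N.factorial : K) ≠ 0 := Nat.cast_ne_zero.mpr (Nat.factorial_ne_zero _)
  field_simp
  linear_combination (-(x^k * y^(N-k))) * hh

lemma lin_ratio_tendsto (A D : ℝ) :
    Tendsto (fun n : ℕ => ((n : ℝ) + A) / ((n : ℝ) + D)) atTop (nhds 1) := by
  have hD : Tendsto (fun n : ℕ => (n : ℝ) + D) atTop atTop :=
    tendsto_atTop_add_const_right _ D tendsto_natCast_atTop_atTop
  have h0 : Tendsto (fun n : ℕ => (A - D) / ((n : ℝ) + D)) atTop (nhds 0) :=
    Tendsto.div_atTop tendsto_const_nhds hD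
  have h1 : Tendsto (fun n : ℕ => 1 + (A - D) / ((n : ℝ) + D)) atTop (nhds 1) := by
    simpa using tendsto_const_nhds.add h0
  refine h1.congr' ?_
  filter_upwards [hD.eventually_ge_atTop 1] with n hn
  have : (n : ℝ) + D ≠ 0 := by linarith
  field_simp
  ring

set_option maxHeartbeats 1000000 in
lemma ratio_summable (α β γ : ℂ) (hγ : ∀ n : ℕ, γ + (n : ℂ) ≠ 0) (r : ℝ)
    (hr0 : 0 ≤ r) (hr : r < 1) :
    Summable (fun N : ℕ => ‖poch α N * poch β N / poch γ N‖ * r ^ N / N.factorial) := by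
  have hl1 : (1 + r) / 2 < 1 := by linarith
  have hrl : r < (1 + r) / 2 := by linarith
  have hut : Tendsto (fun n : ℕ =>
      (((n : ℝ) + ‖α‖) / ((n : ℝ) + 1)) * ((((n : ℝ) + ‖β‖) / ((n : ℝ) + (-‖γ‖))) * r))
      atTop (nhds r) := by
    have := (lin_ratio_tendsto ‖α‖ 1).mul ((lin_ratio_tendsto ‖β‖ (-‖γ‖)).mul
      (tendsto_const_nhds (x := r)))
    simpa using this
  refine summable_of_ratio_norm_eventually_le hl1 ?_
  filter_upwards [hut.eventually_le_const hrl, eventually_ge_atTop (⌈‖γ‖⌉₊ + 1)] with n hun hn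
  have hnC : ‖γ‖ + 1 ≤ (n : ℝ) := by
    have h' : (⌈‖γ‖⌉₊ : ℝ) + 1 ≤ (n : ℝ) := by exact_mod_cast hn
    linarith [Nat.le_ceil ‖γ‖]
  have hγn : γ + (n : ℂ) ≠ 0 := hγ n
  have hγn' : (0:ℝ) < ‖γ + (n : ℂ)‖ := norm_pos_iff.mpr hγn
  have hγlb : (n : ℝ) - ‖γ‖ ≤ ‖γ + (n : ℂ)‖ := by
    have h1 : ((n:ℝ)) = ‖(γ + (n : ℂ)) + (-γ)‖ := by
      rw [show (γ + (n : ℂ)) + (-γ) = (n : ℂ) by ring, Complex.norm_natCast]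
    have h2 := norm_add_le (γ + (n : ℂ)) (-γ)
    rw [norm_neg] at h2
    linarith [h1 ▸ h2]
  have hαub : ‖α + (n : ℂ)‖ ≤ (n : ℝ) + ‖α‖ := by
    have := norm_add_le α ((n : ℂ))
    rw [Complex.norm_natCast] at this
    linarith
  have hβub : ‖β + (n : ℂ)‖ ≤ (n : ℝ) + ‖β‖ := by
    have := norm_add_le β ((n : ℂ))
    rw [Complex.norm_natCast] at this
    linarith
  set G : ℝ := ‖poch α n * poch β n / poch γ n‖ * r ^ n / n.factorial with hG
  set w : ℝ := ‖α + (n : ℂ)‖ * ‖β + (n : ℂ)‖ * r / (‖γ + (n : ℂ)‖ * ((n : ℝ) + 1)) with hw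
  have hfac : (n.factorial : ℝ) ≠ 0 := Nat.cast_ne_zero.mpr (Nat.factorial_ne_zero n)
  have key : ‖poch α (n+1) * poch β (n+1) / poch γ (n+1)‖ * r ^ (n+1) / (n+1).factorial
      = G * w := by
    simp only [poch, Nat.factorial_succ, pow_succ, hG, hw]
    rw [norm_div, norm_div, norm_mul, norm_mul, norm_mul, norm_mul]
    have hc : (((n + 1) * n.factorial : ℕ) : ℝ) = ((n : ℝ) + 1) * (n.factorial : ℝ) := by
      push_cast; ring
    rw [hc]
    field_simp
    simp only [norm_mul]
    ring
  have hG0 : 0 ≤ G := by rw [hG]; positivity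
  have hw0 : 0 ≤ w := by rw [hw]; positivity
  have hwu : w ≤ (1 + r) / 2 := by
    refine le_trans ?_ hun
    have hden : (0:ℝ) < ((n : ℝ) + (-‖γ‖)) * ((n : ℝ) + 1) := by
      apply mul_pos <;> nlinarith
    have h1 : ‖α + (n : ℂ)‖ * ‖β + (n : ℂ)‖ * r ≤ ((n : ℝ) + ‖α‖) * (((n : ℝ) + ‖β‖) * r) := by
      have hprod : ‖α + (n : ℂ)‖ * ‖β + (n : ℂ)‖ ≤ ((n : ℝ) + ‖α‖) * ((n : ℝ) + ‖β‖) :=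
        mul_le_mul hαub hβub (norm_nonneg _) (by positivity)
      have := mul_le_mul_of_nonneg_right hprod hr0
      linarith
    have h2 : ((n : ℝ) + (-‖γ‖)) * ((n : ℝ) + 1) ≤ ‖γ + (n : ℂ)‖ * ((n : ℝ) + 1) := by
      nlinarith
    have h3 := div_le_div₀ (b := ‖γ + (n : ℂ)‖ * ((n : ℝ) + 1)) (by positivity) h1 hden h2
    rw [hw]
    refine le_trans h3 (le_of_eq ?_)
    have hb : ((n : ℝ) + 1) ≠ 0 := by positivity
    have hd : ((n : ℝ) + (-‖γ‖)) ≠ 0 := by nlinarith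
    field_simp
  calc ‖‖poch α (n+1) * poch β (n+1) / poch γ (n+1)‖ * r ^ (n+1) / (n+1).factorial‖
      = G * w := by
        rw [Real.norm_of_nonneg (by positivity), key]
    _ ≤ G * ((1 + r) / 2) := mul_le_mul_of_nonneg_left hwu hG0
    _ = (1 + r) / 2 * ‖G‖ := by rw [Real.norm_of_nonneg hG0]; ring

lemma norm_F (a c x y : ℂ) (m n : ℕ) :
    ‖poch a (2*m+2*n) * x^m * y^n / (poch c (m+n) * (m.factorial : ℂ) * (n.factorial : ℂ))‖
      = ‖poch (a/2) (m+n) * poch ((a+1)/2) (m+n) / poch c (m+n)‖ *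
          ((4:ℝ)^(m+n) * ‖x‖^m * ‖y‖^n) / (m.factorial * n.factorial) := by
  rw [show 2*m+2*n = 2*(m+n) by ring, poch_dup]
  rw [norm_div, norm_mul, norm_mul, norm_mul, norm_mul, norm_mul, norm_mul, norm_pow,
    norm_pow, norm_pow, norm_div, norm_mul]
  simp only [Complex.norm_natCast]
  have h4 : ‖(4:ℂ)‖ = (4:ℝ) := by
    rw [show (4:ℂ) = ((4:ℕ):ℂ) by norm_num, Complex.norm_natCast]; norm_num
  rw [h4]
  ring

lemma sum_antidiag_F (a c x y : ℂ) (N : ℕ) :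
    ∑ p ∈ Finset.HasAntidiagonal.antidiagonal N,
        poch a (2*p.1+2*p.2) * x^p.1 * y^p.2 /
          (poch c (p.1+p.2) * (p.1.factorial : ℂ) * (p.2.factorial : ℂ))
      = poch (a/2) N * poch ((a+1)/2) N / (poch c N * (N.factorial : ℂ)) * (4*(x+y))^N := by
  have hcg : ∀ p ∈ Finset.HasAntidiagonal.antidiagonal N,
      poch a (2*p.1+2*p.2) * x^p.1 * y^p.2 /
          (poch c (p.1+p.2) * (p.1.factorial : ℂ) * (p.2.factorial : ℂ))
        = (4^N * poch (a/2) N * poch ((a+1)/2) N / poch c N) *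
            (x^p.1 * y^p.2 / ((p.1.factorial : ℂ) * p.2.factorial)) := by
    intro p hp
    have hpN : p.1 + p.2 = N := Finset.HasAntidiagonal.mem_antidiagonal.mp hp
    rw [show 2*p.1+2*p.2 = 2*(p.1+p.2) by ring, hpN, poch_dup]
    ring
  rw [Finset.sum_congr rfl hcg, ← Finset.mul_sum, antidiagonal_pow_sum, mul_pow]
  ring

lemma sum_antidiag_norm_F (a c x y : ℂ) (N : ℕ) :
    ∑ p ∈ Finset.HasAntidiagonal.antidiagonal N,
        ‖poch a (2*p.1+2*p.2) * x^p.1 * y^p.2 /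
          (poch c (p.1+p.2) * (p.1.factorial : ℂ) * (p.2.factorial : ℂ))‖
      = ‖poch (a/2) N * poch ((a+1)/2) N / poch c N‖ * (4*(‖x‖+‖y‖))^N / N.factorial := by
  have hcg : ∀ p ∈ Finset.HasAntidiagonal.antidiagonal N,
      ‖poch a (2*p.1+2*p.2) * x^p.1 * y^p.2 /
          (poch c (p.1+p.2) * (p.1.factorial : ℂ) * (p.2.factorial : ℂ))‖
        = (‖poch (a/2) N * poch ((a+1)/2) N / poch c N‖ * (4:ℝ)^N) *
            (‖x‖^p.1 * ‖y‖^p.2 / ((p.1.factorial : ℝ) * p.2.factorial)) := by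
    intro p hp
    have hpN : p.1 + p.2 = N := Finset.HasAntidiagonal.mem_antidiagonal.mp hp
    rw [norm_F, hpN]
    ring
  rw [Finset.sum_congr rfl hcg, ← Finset.mul_sum, antidiagonal_pow_sum, mul_pow]
  ring

theorem two_var_case (a c : ℂ) (hc : ∀ n : ℕ, c ≠ -(n : ℂ)) (x y : ℂ)
    (hxy : ‖x‖ + ‖y‖ < 1 / 4) :
    HasSum
      (fun mn : ℕ × ℕ =>
        poch a (2 * mn.1 + 2 * mn.2) * x ^ mn.1 * y ^ mn.2 /
          (poch c (mn.1 + mn.2) * (Nat.factorial mn.1 : ℂ) * (Nat.factorial mn.2 : ℂ)))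
      (hyp (a / 2) ((a + 1) / 2) c (4 * (x + y))) := by
  set F : ℕ × ℕ → ℂ := fun mn =>
    poch a (2 * mn.1 + 2 * mn.2) * x ^ mn.1 * y ^ mn.2 /
      (poch c (mn.1 + mn.2) * (Nat.factorial mn.1 : ℂ) * (Nat.factorial mn.2 : ℂ)) with hF
  have hcγ : ∀ n : ℕ, c + (n : ℂ) ≠ 0 := by
    intro n h
    exact hc n (by linear_combination h)
  have hr0 : (0:ℝ) ≤ 4*(‖x‖+‖y‖) := by positivity
  have hr1 : 4*(‖x‖+‖y‖) < 1 := by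
    have : ‖x‖ + ‖y‖ < 1/4 := by
      simpa using hxy
    linarith
  have hsum := ratio_summable (a/2) ((a+1)/2) c hcγ (4*(‖x‖+‖y‖)) hr0 hr1
  -- summability of the norms over the sigma type
  have hfiber : ∀ N : ℕ, ∀ f : ℕ × ℕ → ℝ,
      ∑' p : (Finset.HasAntidiagonal.antidiagonal N : Finset (ℕ × ℕ)), f (p : ℕ × ℕ)
        = ∑ p ∈ Finset.HasAntidiagonal.antidiagonal N, f p := by
    intro N f
    exact Finset.tsum_subtype _ f
  have hnormsum : Summable (fun σ : Σ N : ℕ, (Finset.HasAntidiagonal.antidiagonal N : Finset (ℕ × ℕ)) =>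
      ‖F (σ.2 : ℕ × ℕ)‖) := by
    refine (summable_sigma_of_nonneg (fun _ => norm_nonneg _)).mpr ⟨fun N => ?_, ?_⟩
    · exact Summable.of_finite
    · refine hsum.congr fun N => ?_
      rw [hfiber N (fun p => ‖F p‖), hF]
      simp only []
      rw [sum_antidiag_norm_F]
  have hFnorm : Summable fun mn : ℕ × ℕ => ‖F mn‖ := by
    have := Finset.HasAntidiagonal.sigmaAntidiagonalEquivProd.summable_iff
      (f := fun mn : ℕ × ℕ => ‖F mn‖)
    exact this.mp (by simpa [Finset.HasAntidiagonal.sigmaAntidiagonalEquivProd, Function.comp_def] using hnormsum)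
  have hFsummable : Summable F := hFnorm.of_norm
  have hFsigma : Summable (fun σ : Σ N : ℕ, (Finset.HasAntidiagonal.antidiagonal N : Finset (ℕ × ℕ)) =>
      F (σ.2 : ℕ × ℕ)) := by
    refine Summable.of_norm ?_
    exact hnormsum
  have htsum : ∑' mn : ℕ × ℕ, F mn = hyp (a / 2) ((a + 1) / 2) c (4 * (x + y)) := by
    rw [← Finset.HasAntidiagonal.sigmaAntidiagonalEquivProd.tsum_eq F]
    have h1 : ∑' σ : Σ N : ℕ, (Finset.HasAntidiagonal.antidiagonal N : Finset (ℕ × ℕ)),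
        F (Finset.HasAntidiagonal.sigmaAntidiagonalEquivProd σ)
        = ∑' N : ℕ, ∑' p : (Finset.HasAntidiagonal.antidiagonal N : Finset (ℕ × ℕ)), F (p : ℕ × ℕ) := by
      refine Summable.tsum_sigma' (fun N => Summable.of_finite) ?_
      simpa [Finset.HasAntidiagonal.sigmaAntidiagonalEquivProd] using hFsigma
    rw [h1]
    unfold hyp
    refine tsum_congr fun N => ?_
    rw [show (∑' p : (Finset.HasAntidiagonal.antidiagonal N : Finset (ℕ × ℕ)), F (p : ℕ × ℕ))
        = ∑ p ∈ Finset.HasAntidiagonal.antidiagonal N, F p from Finset.tsum_subtype _ F]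
    rw [hF]
    simp only []
    rw [sum_antidiag_F]
  rw [← htsum]
  exact hFsummable.hasSum
end

section
/- For real a > 0 and complex z with 0 < |z| < 1 (principal branches used), the Gauss hypergeometric function satisfies F((a+1)/2, (a+2)/2; a; z) = 2^{a−1} ((a−2)(√(1−z) − 1) + (a−1)z) / (a z (1−z)^{3/2} (√(1−z)+1)^{a−2}). -/
open Complex Metric

namespace HypAux

noncomputable def U (z : ℂ) : ℂ := (1 - z) ^ ((1:ℂ)/2)

noncomputable def V (a : ℝ) (z : ℂ) : ℂ := (1 + U z) ^ ((1:ℂ) - a)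

noncomputable def g0 (a : ℝ) (z : ℂ) : ℂ :=
  (2:ℂ)^((a:ℂ)-1) / a * ((1 + ((a:ℂ)-1) * U z) * V a z / U z ^ 3)

noncomputable def g1 (a : ℝ) (z : ℂ) : ℂ :=
  (2:ℂ)^((a:ℂ)-1) / a *
    (V a z * (((a:ℂ)^2-1) * U z^2 + 3*(a:ℂ)*U z + 3) / (2 * U z^5 * (1 + U z)))

noncomputable def g2 (a : ℝ) (z : ℂ) : ℂ :=
  (2:ℂ)^((a:ℂ)-1) / a *
    (V a z * (((a:ℂ)^2-1)*((a:ℂ)+3)*U z^3 + 3*(2*(a:ℂ)^2+4*(a:ℂ)-1)*U z^2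
        + 15*((a:ℂ)+1)*U z + 15) / (4 * U z^7 * (1 + U z)^2))

variable {z : ℂ} {a : ℝ}

lemma re_pos (hz : ‖z‖ < 1) : 0 < (1 - z).re := by
  have h := Complex.abs_re_le_norm z
  have : z.re ≤ ‖z‖ := (abs_le.1 h).2
  simp only [sub_re, one_re]
  linarith

lemma hne (hz : ‖z‖ < 1) : (1 : ℂ) - z ≠ 0 := by
  intro h
  have := re_pos hz
  rw [h] at this
  simp at this

lemma slit1 (hz : ‖z‖ < 1) : (1 : ℂ) - z ∈ slitPlane :=
  Or.inl (re_pos hz)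

lemma Ure (hz : ‖z‖ < 1) : 0 < (U z).re := by
  rw [U, cpow_def_of_ne_zero (hne hz), exp_re]
  have harg : |Complex.arg (1 - z)| < Real.pi / 2 :=
    Complex.abs_arg_lt_pi_div_two_iff.2 (Or.inl (re_pos hz))
  have him : (Complex.log (1 - z) * ((1:ℂ)/2)).im = Complex.arg (1 - z) / 2 := by
    simp [Complex.mul_im, Complex.log_im]
    ring
  rw [him]
  have hpi : 0 < Real.pi := Real.pi_pos
  have : Real.cos (Complex.arg (1 - z) / 2) > 0 := by
    apply Real.cos_pos_of_mem_Ioo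
    constructor
    · cases' abs_lt.1 harg with h1 h2; linarith
    · cases' abs_lt.1 harg with h1 h2; linarith
  positivity

lemma Une (hz : ‖z‖ < 1) : U z ≠ 0 := by
  intro h
  have := Ure hz
  rw [h] at this
  simp at this

lemma Usq (hz : ‖z‖ < 1) : U z ^ 2 = 1 - z := by
  rw [U, sq, ← Complex.cpow_add _ _ (hne hz)]
  norm_num

lemma re1U (hz : ‖z‖ < 1) : 0 < (1 + U z).re := by
  have := Ure hz
  simp only [add_re, one_re]
  linarith

lemma h1Une (hz : ‖z‖ < 1) : (1 : ℂ) + U z ≠ 0 := by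
  intro h
  have := re1U hz
  rw [h] at this
  simp at this

lemma slit2 (hz : ‖z‖ < 1) : (1 : ℂ) + U z ∈ slitPlane :=
  Or.inl (re1U hz)

lemma hU' (hz : ‖z‖ < 1) : HasDerivAt U (-(2 * U z)⁻¹) z := by
  have h1 : HasDerivAt (fun w : ℂ => 1 - w) (-1 : ℂ) z := by
    simpa using (hasDerivAt_id z).const_sub (1 : ℂ)
  have h2 := h1.cpow_const (c := (1:ℂ)/2) (slit1 hz)
  convert h2 using 1
  · rfl
  have : ((1:ℂ)/2 - 1) = -(1/2) := by norm_num
  rw [this, Complex.cpow_neg]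
  have hu := Une hz
  rw [U] at hu ⊢
  field_simp


lemma hV' (hz : ‖z‖ < 1) :
    HasDerivAt (V a) (((a:ℂ) - 1) * V a z / (2 * U z * (1 + U z))) z := by
  have h1 : HasDerivAt (fun w : ℂ => 1 + U w) (-(2 * U z)⁻¹) z := (hU' hz).const_add 1
  have h2 := h1.cpow_const (c := (1:ℂ) - a) (slit2 hz)
  convert h2 using 1
  · rfl
  rw [show ((1:ℂ) - a - 1) = ((1:ℂ) - a) - 1 from rfl, Complex.cpow_sub _ _ (h1Une hz),
    Complex.cpow_one]
  have hu := Une hz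
  have h1u := h1Une hz
  rw [V, U] at *
  simp only [div_eq_mul_inv, mul_inv, inv_inv]
  field_simp [hu, h1u]
  ring

lemma hg0' (ha : a ≠ 0) (hz : ‖z‖ < 1) : HasDerivAt (g0 a) (g1 a z) z := by
  have hP : HasDerivAt (fun w : ℂ => 1 + ((a:ℂ)-1) * U w) (((a:ℂ)-1) * -(2 * U z)⁻¹) z :=
    ((hU' hz).const_mul _).const_add 1
  have hnum := hP.mul (hV' (a := a) hz)
  have hden : HasDerivAt (fun w : ℂ => U w ^ 3) ((3:ℕ) * U z ^ 2 * -(2 * U z)⁻¹) z :=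
    (hU' hz).pow 3
  have hq := hnum.div hden (pow_ne_zero 3 (Une hz))
  have h := hq.const_mul ((2:ℂ)^((a:ℂ)-1) / a)
  convert h using 1
  · rfl
  · rfl
  · rfl
  rw [g1]
  simp only [Pi.mul_apply]
  have hu := Une hz
  have h1u := h1Une hz
  set u := U z
  set v := V a z
  set s := (1:ℂ) + u with hs
  have hsne : s ≠ 0 := h1u
  clear_value u v s
  field_simp [hu, hsne, ha]
  first
  | (rw [eq_div_iff (by simp [hu, hsne, ha])]; rw [hs]; ring)
  | (rw [div_eq_iff (by simp [hu, hsne, ha])]; rw [hs]; ring)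
  | (rw [hs]; ring)

lemma hg1' (ha : a ≠ 0) (hz : ‖z‖ < 1) : HasDerivAt (g1 a) (g2 a z) z := by
  have hN1 : HasDerivAt (fun w : ℂ => ((a:ℂ)^2-1) * U w^2 + 3*(a:ℂ)*U w + 3)
      ((((a:ℂ)^2-1) * ((2:ℕ) * U z ^ 1 * -(2 * U z)⁻¹)) + (3*(a:ℂ)) * -(2 * U z)⁻¹) z := by
    exact ((((hU' hz).pow 2).const_mul _).add ((hU' hz).const_mul _)).add_const 3
  have hden : HasDerivAt (fun w : ℂ => 2 * U w^5 * (1 + U w))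
      ((2 * ((5:ℕ) * U z ^ 4 * -(2 * U z)⁻¹)) * (1 + U z) + 2 * U z^5 * -(2 * U z)⁻¹) z :=
    (((hU' hz).pow 5).const_mul 2).mul ((hU' hz).const_add 1)
  have hdne : 2 * U z^5 * (1 + U z) ≠ 0 :=
    mul_ne_zero (mul_ne_zero two_ne_zero (pow_ne_zero 5 (Une hz))) (h1Une hz)
  have hq := ((hV' (a := a) hz).mul hN1).div hden hdne
  have h := hq.const_mul ((2:ℂ)^((a:ℂ)-1) / a)
  convert h using 1
  · rfl
  · rfl
  · rfl
  rw [g2]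
  simp only [Pi.mul_apply]
  have hu := Une hz
  have h1u := h1Une hz
  set u := U z
  set v := V a z
  set s := (1:ℂ) + u with hs
  have hsne : s ≠ 0 := h1u
  clear_value u v s
  field_simp [hu, hsne, ha]
  first
  | (rw [eq_div_iff (by simp [hu, hsne, ha])]; rw [hs]; ring)
  | (rw [div_eq_iff (by simp [hu, hsne, ha])]; rw [hs]; ring)
  | (rw [hs]; ring)

lemma ode (ha : a ≠ 0) (hz : ‖z‖ < 1) :
    (z - z^2) * g2 a z + ((a:ℂ) - ((a:ℂ) + 5/2) * z) * g1 a z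
      - ((a:ℂ)+1)*((a:ℂ)+2)/4 * g0 a z = 0 := by
  have hu := Une hz
  have h1u := h1Une hz
  have hzz : z = 1 - U z ^ 2 := by linear_combination Usq hz
  rw [show z - z^2 = (1 - U z ^ 2) - (1 - U z ^ 2)^2 from by rw [← hzz],
    show (a:ℂ) - ((a:ℂ) + 5/2) * z = (a:ℂ) - ((a:ℂ) + 5/2) * (1 - U z ^ 2) from by rw [← hzz]]
  rw [g0, g1, g2]
  have haC : (a:ℂ) ≠ 0 := by exact_mod_cast ha
  set u := U z
  set v := V a z
  set s := (1:ℂ) + u with hs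
  clear_value u v s
  have hsne : s ≠ 0 := h1u
  have hD : (4:ℂ) * u ^ 7 * s ^ 2 ≠ 0 := by simp [hu, hsne]
  have e2 : v * (((a:ℂ)^2-1) * u^2 + 3*(a:ℂ)*u + 3) / (2 * u^5 * s)
      = (2*u^2*s) * (v * (((a:ℂ)^2-1)*u^2 + 3*(a:ℂ)*u + 3)) / (4 * u^7 * s^2) := by
    rw [div_eq_div_iff (by simp [hu, hsne]) hD]; ring
  have e3 : (1 + ((a:ℂ) - 1) * u) * v / u ^ 3
      = (4*u^4*s^2) * ((1 + ((a:ℂ)-1)*u) * v) / (4 * u^7 * s^2) := by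
    rw [div_eq_div_iff (by simp [hu]) hD]; ring
  rw [e2, e3]
  have hnum : (2:ℂ)^((a:ℂ)-1) / (a:ℂ) * (v *
      (((1 - u^2) - (1 - u^2)^2) *
          (((a:ℂ)^2-1)*((a:ℂ)+3)*u^3 + 3*(2*(a:ℂ)^2+4*(a:ℂ)-1)*u^2 + 15*((a:ℂ)+1)*u + 15)
        + ((a:ℂ) - ((a:ℂ) + 5/2) * (1 - u^2)) * ((2*u^2*s) *
            (((a:ℂ)^2-1)*u^2 + 3*(a:ℂ)*u + 3))
        - ((a:ℂ)+1)*((a:ℂ)+2)/4 * ((4*u^4*s^2) * (1 + ((a:ℂ)-1)*u)))) = 0 := by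
    have : (((1 - u^2) - (1 - u^2)^2) *
          (((a:ℂ)^2-1)*((a:ℂ)+3)*u^3 + 3*(2*(a:ℂ)^2+4*(a:ℂ)-1)*u^2 + 15*((a:ℂ)+1)*u + 15)
        + ((a:ℂ) - ((a:ℂ) + 5/2) * (1 - u^2)) * ((2*u^2*s) *
            (((a:ℂ)^2-1)*u^2 + 3*(a:ℂ)*u + 3))
        - ((a:ℂ)+1)*((a:ℂ)+2)/4 * ((4*u^4*s^2) * (1 + ((a:ℂ)-1)*u))) = 0 := by
      rw [hs]; ring
    rw [this, mul_zero, mul_zero]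
  have step : (2:ℂ)^((a:ℂ)-1) / (a:ℂ) * (v *
      (((1 - u^2) - (1 - u^2)^2) *
          (((a:ℂ)^2-1)*((a:ℂ)+3)*u^3 + 3*(2*(a:ℂ)^2+4*(a:ℂ)-1)*u^2 + 15*((a:ℂ)+1)*u + 15)
        + ((a:ℂ) - ((a:ℂ) + 5/2) * (1 - u^2)) * ((2*u^2*s) *
            (((a:ℂ)^2-1)*u^2 + 3*(a:ℂ)*u + 3))
        - ((a:ℂ)+1)*((a:ℂ)+2)/4 * ((4*u^4*s^2) * (1 + ((a:ℂ)-1)*u)))) / (4 * u^7 * s^2)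
      = 0 := by rw [hnum, zero_div]
  linear_combination step


lemma mem_ball_iff {w : ℂ} : w ∈ ball (0:ℂ) 1 ↔ ‖w‖ < 1 := by
  simp [mem_ball_zero_iff]

variable (a) in
lemma hdiff (ha : a ≠ 0) : DifferentiableOn ℂ (g0 a) (ball (0:ℂ) 1) := fun w hw =>
  (hg0' ha (mem_ball_iff.1 hw)).differentiableAt.differentiableWithinAt

variable (a) in
lemma hAk (ha : a ≠ 0) (k : ℕ) :
    AnalyticOnNhd ℂ (iteratedDeriv k (g0 a)) (ball (0:ℂ) 1) := by
  induction k with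
  | zero =>
    simpa [iteratedDeriv_zero] using
      ((analyticOnNhd_iff_differentiableOn isOpen_ball).2 (hdiff a ha))
  | succ k ih => rw [iteratedDeriv_succ]; exact ih.deriv

lemma iterated1 (ha : a ≠ 0) (hz : ‖z‖ < 1) :
    iteratedDeriv 1 (g0 a) z = g1 a z := by
  rw [iteratedDeriv_one]
  exact (hg0' ha hz).deriv

lemma iterated2 (ha : a ≠ 0) (hz : ‖z‖ < 1) :
    iteratedDeriv 2 (g0 a) z = g2 a z := by
  rw [show (2:ℕ) = 1 + 1 from rfl, iteratedDeriv_succ]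
  have ev : iteratedDeriv 1 (g0 a) =ᶠ[nhds z] g1 a := by
    filter_upwards [isOpen_ball.mem_nhds (mem_ball_iff.2 hz)] with w hw
    exact iterated1 ha (mem_ball_iff.1 hw)
  rw [ev.deriv_eq]
  exact (hg1' ha hz).deriv

lemma iter (ha : a ≠ 0) (n : ℕ) :
    ∀ w ∈ ball (0:ℂ) 1,
      (w - w^2) * iteratedDeriv (n+2) (g0 a) w
        + ((n:ℂ)*(1-2*w) + (a:ℂ) - ((a:ℂ)+5/2)*w) * iteratedDeriv (n+1) (g0 a) w
        + (-(n:ℂ)*((n:ℂ)-1) - (n:ℂ)*((a:ℂ)+5/2) - ((a:ℂ)+1)*((a:ℂ)+2)/4)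
            * iteratedDeriv n (g0 a) w = 0 := by
  induction n with
  | zero =>
    intro w hw
    have hw' := mem_ball_iff.1 hw
    rw [iterated2 ha hw', show (0:ℕ)+1 = 1 from rfl, iterated1 ha hw', iteratedDeriv_zero]
    push_cast
    linear_combination ode ha hw'
  | succ n ih =>
    intro w hw
    have hw' := mem_ball_iff.1 hw
    have hd : ∀ k, HasDerivAt (iteratedDeriv k (g0 a)) (iteratedDeriv (k+1) (g0 a) w) w := by
      intro k
      have h := ((hAk a ha k w hw).differentiableAt).hasDerivAt
      rwa [iteratedDeriv_succ]
    have t1 : HasDerivAt (fun x : ℂ => x - x^2) (1 - 2*w) w := by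
      simpa using (hasDerivAt_id w).fun_sub ((hasDerivAt_id w).fun_pow 2)
    have t2 : HasDerivAt (fun x : ℂ => (n:ℂ)*(1-2*x) + (a:ℂ) - ((a:ℂ)+5/2)*x)
        ((n:ℂ)*(-2) - ((a:ℂ)+5/2)) w := by
      have h1 : HasDerivAt (fun x : ℂ => (1:ℂ)-2*x) (-2 : ℂ) w := by
        simpa using ((hasDerivAt_id w).const_mul (2:ℂ)).const_sub (1:ℂ)
      simpa using ((h1.const_mul ((n:ℂ))).add_const ((a:ℂ))).fun_sub
        ((hasDerivAt_id w).const_mul ((a:ℂ)+5/2))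
    have hF : HasDerivAt (fun x : ℂ =>
        (x - x^2) * iteratedDeriv (n+2) (g0 a) x
          + ((n:ℂ)*(1-2*x) + (a:ℂ) - ((a:ℂ)+5/2)*x) * iteratedDeriv (n+1) (g0 a) x
          + (-(n:ℂ)*((n:ℂ)-1) - (n:ℂ)*((a:ℂ)+5/2) - ((a:ℂ)+1)*((a:ℂ)+2)/4)
              * iteratedDeriv n (g0 a) x)
        (((1 - 2*w) * iteratedDeriv (n+2) (g0 a) w + (w - w^2) * iteratedDeriv (n+3) (g0 a) w)
          + (((n:ℂ)*(-2) - ((a:ℂ)+5/2)) * iteratedDeriv (n+1) (g0 a) w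
              + ((n:ℂ)*(1-2*w) + (a:ℂ) - ((a:ℂ)+5/2)*w) * iteratedDeriv (n+2) (g0 a) w)
          + (-(n:ℂ)*((n:ℂ)-1) - (n:ℂ)*((a:ℂ)+5/2) - ((a:ℂ)+1)*((a:ℂ)+2)/4)
              * iteratedDeriv (n+1) (g0 a) w) w := by
      exact ((t1.mul (hd (n+2))).add (t2.mul (hd (n+1)))).add ((hd n).const_mul _)
    have hFzero : (fun x : ℂ =>
        (x - x^2) * iteratedDeriv (n+2) (g0 a) x
          + ((n:ℂ)*(1-2*x) + (a:ℂ) - ((a:ℂ)+5/2)*x) * iteratedDeriv (n+1) (g0 a) x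
          + (-(n:ℂ)*((n:ℂ)-1) - (n:ℂ)*((a:ℂ)+5/2) - ((a:ℂ)+1)*((a:ℂ)+2)/4)
              * iteratedDeriv n (g0 a) x) =ᶠ[nhds w] (fun _ => (0:ℂ)) := by
      filter_upwards [isOpen_ball.mem_nhds hw] with x hx
      exact ih x hx
    have hD := hF.deriv
    rw [hFzero.deriv_eq, deriv_const] at hD
    push_cast
    linear_combination -hD


lemma g00 (ha : a ≠ 0) : g0 a 0 = 1 := by
  have haC : (a:ℂ) ≠ 0 := by exact_mod_cast ha
  have hU0 : U 0 = 1 := by rw [U]; simp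
  have hV0 : V a 0 = 2 ^ ((1:ℂ) - a) := by
    rw [V, hU0]; norm_num
  have h2 : (2:ℂ)^((a:ℂ)-1) * 2^((1:ℂ)-a) = 1 := by
    rw [← Complex.cpow_add _ _ two_ne_zero]
    norm_num
  rw [g0, hU0, hV0]
  field_simp
  linear_combination (a:ℂ) * h2

lemma final_alg (ha : 0 < a) (hz : ‖z‖ < 1) (hz0 : z ≠ 0) :
    g0 a z =
      (2 : ℂ) ^ ((a : ℂ) - 1) *
          (((a : ℂ) - 2) * ((1 - z) ^ ((1 : ℂ) / 2) - 1) + ((a : ℂ) - 1) * z) /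
        ((a : ℂ) * z * (1 - z) ^ ((3 : ℂ) / 2) *
          ((1 - z) ^ ((1 : ℂ) / 2) + 1) ^ ((a : ℂ) - 2)) := by
  have haC : (a:ℂ) ≠ 0 := by exact_mod_cast ha.ne'
  have hu := Une hz
  have h1u := h1Une hz
  have hUdef : (1 - z) ^ ((1:ℂ)/2) = U z := rfl
  have hcomm : (1 - z) ^ ((1:ℂ)/2) + 1 = 1 + U z := by rw [hUdef, add_comm]
  have h32 : (1-z)^((3:ℂ)/2) = U z ^ 3 := by
    rw [show (3:ℂ)/2 = 1/2 + 1 from by norm_num, Complex.cpow_add _ _ (hne hz),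
      Complex.cpow_one, hUdef, ← Usq hz]
    ring
  have hw : V a z * (1 + U z)^((a:ℂ)-2) = (1 + U z)⁻¹ := by
    rw [V, ← Complex.cpow_add _ _ (h1Une hz),
      show (1:ℂ) - a + ((a:ℂ) - 2) = -1 from by ring, Complex.cpow_neg_one]
  have hwne : (1 + U z)^((a:ℂ)-2) ≠ 0 := by
    simp [Complex.cpow_eq_zero_iff, h1Une hz]
  have hnum : ((a:ℂ)-2)*(U z - 1) + ((a:ℂ)-1)*z = (1 - U z)*(1+((a:ℂ)-1)*U z) := by
    linear_combination ((a:ℂ)-1) * Usq hz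
  have hz2 : z = (1 - U z) * (1 + U z) := by linear_combination Usq hz
  rw [hcomm, h32, hUdef, hnum, g0]
  set u := U z
  set v := V a z
  set w := (1 + u)^((a:ℂ)-2)
  have hw' : v * w * (1 + u) = 1 := by rw [hw]; exact inv_mul_cancel₀ h1u
  have hkey : v * w * z = 1 - u := by
    rw [hz2, show v*w*((1-u)*(1+u)) = (1-u)*(v*w*(1+u)) from by ring, hw', mul_one]
  rw [div_mul_div_comm, div_eq_div_iff (by simp [haC, hu]) (by simp [haC, hz0, hu, hwne])]
  linear_combination ((2:ℂ)^((a:ℂ)-1) * (1+((a:ℂ)-1)*u) * (a:ℂ) * u^3) * hkey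


lemma pochA_ne (ha : 0 < a) : ∀ n : ℕ, poch (a:ℂ) n ≠ 0 := by
  intro n
  induction n with
  | zero => simp [poch]
  | succ n ih =>
    rw [poch]
    refine mul_ne_zero ih ?_
    intro h0
    have hre : ((a:ℂ) + (n:ℂ)).re = a + n := by simp
    rw [h0] at hre
    simp at hre
    nlinarith [Nat.cast_nonneg (α := ℝ) n]

lemma na_ne (ha : 0 < a) (n : ℕ) : (n:ℂ) + (a:ℂ) ≠ 0 := by
  intro h0
  have hre : ((n:ℂ) + (a:ℂ)).re = n + a := by simp
  rw [h0] at hre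
  simp at hre
  nlinarith [Nat.cast_nonneg (α := ℝ) n]

theorem main (ha : 0 < a) (hz : ‖z‖ < 1) :
    hyp (((a:ℂ) + 1) / 2) (((a:ℂ) + 2) / 2) (a:ℂ) z = g0 a z := by
  have ha' : a ≠ 0 := ha.ne'
  have haC : (a:ℂ) ≠ 0 := by exact_mod_cast ha'
  set R : NNReal := ⟨(1 + ‖z‖)/2, by positivity⟩ with hR
  have hR0 : 0 < R := by
    rw [← NNReal.coe_lt_coe]
    show (0:ℝ) < (1 + ‖z‖)/2
    positivity
  have hRlt : (R:ℝ) < 1 := by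
    show (1 + ‖z‖)/2 < 1
    linarith
  have hsub : closedBall (0:ℂ) (R:ℝ) ⊆ ball (0:ℂ) 1 := closedBall_subset_ball hRlt
  have hps : HasFPowerSeriesOnBall (g0 a) (cauchyPowerSeries (g0 a) 0 R) 0 R :=
    ((hdiff a ha').mono hsub).hasFPowerSeriesOnBall hR0
  set p := cauchyPowerSeries (g0 a) 0 R with hp
  have key : ∀ n : ℕ, (n.factorial : ℂ) * p.coeff n = iteratedDeriv n (g0 a) 0 := by
    intro n
    have h := hps.factorial_smul (1:ℂ) n
    simp only [FormalMultilinearSeries.apply_eq_pow_smul_coeff, one_pow, one_smul] at h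
    rw [← iteratedDeriv_eq_iteratedFDeriv] at h
    rw [← h, nsmul_eq_mul]
  have hrec : ∀ n : ℕ, ((n:ℂ) + (a:ℂ)) * iteratedDeriv (n+1) (g0 a) 0 =
      ((n:ℂ) + ((a:ℂ)+1)/2) * ((n:ℂ) + ((a:ℂ)+2)/2) * iteratedDeriv n (g0 a) 0 := by
    intro n
    have h := iter ha' n 0 (mem_ball_self one_pos)
    linear_combination h
  have coeff_eq : ∀ n : ℕ, p.coeff n =
      poch (((a:ℂ)+1)/2) n * poch (((a:ℂ)+2)/2) n / (poch (a:ℂ) n * (n.factorial : ℂ)) := by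
    intro n
    induction n with
    | zero =>
      have h0 := key 0
      simp only [Nat.factorial_zero, Nat.cast_one, one_mul, iteratedDeriv_zero] at h0
      rw [h0, g00 ha']
      simp [poch]
    | succ n ih =>
      have h2 := key (n+1)
      have h3 := hrec n
      have hfac : ((n+1).factorial : ℂ) = ((n:ℂ)+1) * (n.factorial : ℂ) := by
        rw [Nat.factorial_succ]; push_cast; ring
      have hfne : ((n.factorial : ℕ) : ℂ) ≠ 0 := by
        exact_mod_cast Nat.factorial_ne_zero n
      have hn1 : ((n:ℂ) + 1) ≠ 0 := Nat.cast_add_one_ne_zero n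
      have hPA := pochA_ne ha n
      have hna := na_ne ha n
      have hAn : ((a:ℂ) + n) ≠ 0 := by rw [add_comm]; exact hna
      have e : ((n:ℂ) + (a:ℂ)) * ((((n:ℂ)+1) * (n.factorial:ℂ)) * p.coeff (n+1)) =
          ((n:ℂ) + ((a:ℂ)+1)/2) * ((n:ℂ) + ((a:ℂ)+2)/2) *
            ((n.factorial:ℂ) * p.coeff n) := by
        have h2' : (((n:ℂ)+1) * (n.factorial:ℂ)) * p.coeff (n+1)
            = iteratedDeriv (n+1) (g0 a) 0 := by rw [← hfac]; exact h2
        rw [h2', key n]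
        exact h3
      have ih2 : p.coeff n * (poch ((a:ℂ)) n * (n.factorial:ℂ)) =
          poch (((a:ℂ)+1)/2) n * poch (((a:ℂ)+2)/2) n := by
        rw [ih]; field_simp
      rw [show poch (((a:ℂ)+1)/2) (n+1) = poch (((a:ℂ)+1)/2) n * (((a:ℂ)+1)/2 + n) from rfl,
        show poch (((a:ℂ)+2)/2) (n+1) = poch (((a:ℂ)+2)/2) n * (((a:ℂ)+2)/2 + n) from rfl,
        show poch ((a:ℂ)) (n+1) = poch ((a:ℂ)) n * ((a:ℂ) + n) from rfl, hfac]
      field_simp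
      linear_combination (4 * poch ((a:ℂ)) n) * e +
        (4 * ((n:ℂ) + ((a:ℂ)+1)/2) * ((n:ℂ) + ((a:ℂ)+2)/2)) * ih2
  have hmem : z ∈ Metric.eball (0:ℂ) R := by
    rw [EMetric.mem_ball, edist_zero_right]
    have h1 : ‖z‖₊ < R := by
      rw [← NNReal.coe_lt_coe]
      show ‖z‖ < (1 + ‖z‖)/2
      linarith
    exact_mod_cast h1
  have hsum := hps.hasSum hmem
  rw [zero_add] at hsum
  have hsum' : HasSum (fun n : ℕ =>
      poch (((a:ℂ)+1)/2) n * poch (((a:ℂ)+2)/2) n / (poch (a:ℂ) n * (n.factorial : ℂ)) * z ^ n)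
      (g0 a z) := by
    have h' := hsum
    simp only [FormalMultilinearSeries.apply_eq_pow_smul_coeff, smul_eq_mul] at h'
    have hfun : (fun n : ℕ =>
        poch (((a:ℂ)+1)/2) n * poch (((a:ℂ)+2)/2) n / (poch (a:ℂ) n * (n.factorial : ℂ)) * z ^ n)
        = (fun n : ℕ => z ^ n * p.coeff n) := by
      funext n
      rw [coeff_eq n]
      ring
    rw [hfun]
    exact h'
  rw [hyp]
  exact hsum'.tsum_eq


end HypAux


theorem hyp_closed_form_a (a : ℝ) (ha : 0 < a) (z : ℂ) (hz : ‖z‖ < 1)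
    (hz0 : z ≠ 0) :
    hyp (((a : ℂ) + 1) / 2) (((a : ℂ) + 2) / 2) (a : ℂ) z =
      (2 : ℂ) ^ ((a : ℂ) - 1) *
          (((a : ℂ) - 2) * ((1 - z) ^ ((1 : ℂ) / 2) - 1) + ((a : ℂ) - 1) * z) /
        ((a : ℂ) * z * (1 - z) ^ ((3 : ℂ) / 2) *
          ((1 - z) ^ ((1 : ℂ) / 2) + 1) ^ ((a : ℂ) - 2)) := by
  rw [HypAux.main ha hz]
  exact HypAux.final_alg ha hz hz0
end

section
/- For complex numbers x, y with |x| + |y| < 1 and any complex r, the double series ∑_{m,n ≥ 0} (r)_{m+n} / (m! n!) x^m y^n converges and equals (1 − x − y)^{−r} (principal branch). -/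
open Filter Finset
noncomputable def ac (r : ℂ) (k : ℕ) : ℂ := poch r k / (Nat.factorial k : ℂ)

lemma ac_succ (r : ℂ) (k : ℕ) : ac r (k+1) * (k+1) = ac r k * (r + k) := by
  have h1 : ((Nat.factorial k : ℂ)) ≠ 0 := Nat.cast_ne_zero.2 (Nat.factorial_ne_zero k)
  have h2 : ((k:ℂ)+1) ≠ 0 := by exact_mod_cast (Nat.cast_ne_zero (R:=ℂ)).2 (Nat.succ_ne_zero k)
  simp only [ac, Nat.factorial_succ, poch]
  push_cast
  field_simp

lemma norm_ac_succ (r : ℂ) (k : ℕ) : ‖ac r (k+1)‖ * (k+1) = ‖ac r k‖ * ‖r + k‖ := by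
  have := congrArg norm (ac_succ r k)
  simp only [norm_mul] at this
  rw [show ‖((k:ℂ)+1)‖ = ((k:ℝ)+1) by
    rw [show ((k:ℂ)+1) = ((k+1 : ℕ) : ℂ) by push_cast; ring, Complex.norm_natCast]; push_cast; ring] at this
  exact this

lemma master (r : ℂ) {s : ℝ} (h0 : 0 ≤ s) (h1 : s < 1) :
    Summable (fun k : ℕ => ((k:ℝ)+1) * ‖ac r k‖ * s ^ k) := by
  set c := (s+1)/2 with hc
  have hsc : s < c := by simp [hc]; linarith
  have hc1 : c < 1 := by simp [hc]; linarith
  have hT : Tendsto (fun k : ℕ => s * (((k:ℝ)+2)/((k:ℝ)+1)) * ((‖r‖+(k:ℝ))/((k:ℝ)+1)))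
      atTop (nhds s) := by
    have hbase : Tendsto (fun k : ℕ => 1 / ((k:ℝ)+1)) atTop (nhds 0) :=
      tendsto_one_div_add_atTop_nhds_zero_nat
    have e1 : Tendsto (fun k : ℕ => ((k:ℝ)+2)/((k:ℝ)+1)) atTop (nhds 1) := by
      have : (fun k : ℕ => ((k:ℝ)+2)/((k:ℝ)+1)) = fun k : ℕ => 1 + 1/((k:ℝ)+1) := by
        funext k
        have h : ((k:ℝ)+1) ≠ 0 := by positivity
        field_simp
        ring
      rw [this]
      simpa using tendsto_const_nhds.add hbase
    have e2 : Tendsto (fun k : ℕ => (‖r‖+(k:ℝ))/((k:ℝ)+1)) atTop (nhds 1) := by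
      have : (fun k : ℕ => (‖r‖+(k:ℝ))/((k:ℝ)+1)) = fun k : ℕ => 1 + (‖r‖-1)*(1/((k:ℝ)+1)) := by
        funext k
        have : ((k:ℝ)+1) ≠ 0 := by positivity
        field_simp
        ring
      rw [this]
      simpa using tendsto_const_nhds.add (tendsto_const_nhds.mul hbase)
    have := ((tendsto_const_nhds : Tendsto (fun _ : ℕ => s) atTop (nhds s)).mul e1).mul e2
    simpa using this
  have hev : ∀ᶠ k : ℕ in atTop,
      s * (((k:ℝ)+2)/((k:ℝ)+1)) * ((‖r‖+(k:ℝ))/((k:ℝ)+1)) < c :=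
    hT.eventually_lt_const hsc
  apply summable_of_ratio_norm_eventually_le hc1
  filter_upwards [hev] with k hk
  have hk1 : (0:ℝ) < (k:ℝ)+1 := by positivity
  have hnn : (0:ℝ) ≤ ((k:ℝ)+1) * ‖ac r k‖ * s ^ k := by positivity
  have hnn2 : (0:ℝ) ≤ ((k:ℝ)+1+1) * ‖ac r (k+1)‖ * s ^ (k+1) := by positivity
  push_cast
  rw [Real.norm_of_nonneg hnn, Real.norm_of_nonneg hnn2]
  have hacn : ‖ac r (k+1)‖ = ‖ac r k‖ * ‖r + (k:ℂ)‖ / ((k:ℝ)+1) := by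
    rw [eq_div_iff hk1.ne']; exact norm_ac_succ r k
  have hrk : ‖r + (k:ℂ)‖ ≤ ‖r‖ + (k:ℝ) := by
    simpa [Complex.norm_natCast] using norm_add_le r (k:ℂ)
  calc ((k:ℝ)+1+1) * ‖ac r (k+1)‖ * s ^ (k+1)
      = (s * (((k:ℝ)+2)/((k:ℝ)+1)) * (‖r + (k:ℂ)‖/((k:ℝ)+1))) * (((k:ℝ)+1) * ‖ac r k‖ * s ^ k) := by
        rw [hacn]; field_simp; ring
    _ ≤ (s * (((k:ℝ)+2)/((k:ℝ)+1)) * ((‖r‖+(k:ℝ))/((k:ℝ)+1))) * (((k:ℝ)+1) * ‖ac r k‖ * s ^ k) := by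
        apply mul_le_mul_of_nonneg_right _ hnn
        apply mul_le_mul_of_nonneg_left _ (by positivity)
        gcongr
    _ ≤ c * (((k:ℝ)+1) * ‖ac r k‖ * s ^ k) := mul_le_mul_of_nonneg_right hk.le hnn

open Complex in
lemma summable_ac_mul (r c : ℂ) {w : ℂ} (hw : ‖w‖ < 1) :
    Summable (fun k : ℕ => ac r k * (c + k) * w ^ k) := by
  apply Summable.of_norm
  apply Summable.of_nonneg_of_le (fun k => norm_nonneg _)
    (f := fun k : ℕ => (‖c‖+1) * (((k:ℝ)+1) * ‖ac r k‖ * ‖w‖ ^ k))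
    _ (((master r (norm_nonneg w) hw).mul_left (‖c‖+1)))
  intro k
  rw [norm_mul, norm_mul, norm_pow]
  have h1 : ‖c + (k:ℂ)‖ ≤ (‖c‖+1) * ((k:ℝ)+1) := by
    have := norm_add_le c (k:ℂ)
    have h2 : ‖(k:ℂ)‖ = (k:ℝ) := by simp
    nlinarith [norm_nonneg c, Nat.cast_nonneg (α := ℝ) k]
  have h2 : (0:ℝ) ≤ ‖ac r k‖ * ‖w‖ ^ k := by positivity
  calc ‖ac r k‖ * ‖c + (k:ℂ)‖ * ‖w‖ ^ k ≤ ‖ac r k‖ * ((‖c‖+1) * ((k:ℝ)+1)) * ‖w‖ ^ k := by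
        apply mul_le_mul_of_nonneg_right _ (by positivity)
        exact mul_le_mul_of_nonneg_left h1 (norm_nonneg _)
    _ = (‖c‖+1) * (((k:ℝ)+1) * ‖ac r k‖ * ‖w‖ ^ k) := by ring

lemma summable_ac (r : ℂ) {w : ℂ} (hw : ‖w‖ < 1) :
    Summable (fun k : ℕ => ac r k * w ^ k) := by
  apply Summable.of_norm
  apply Summable.of_nonneg_of_le (fun k => norm_nonneg _) _ (master r (norm_nonneg w) hw)
  intro k
  rw [norm_mul, norm_pow]
  nlinarith [norm_nonneg (ac r k), pow_nonneg (norm_nonneg w) k, Nat.cast_nonneg (α := ℝ) k,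
    mul_nonneg (norm_nonneg (ac r k)) (pow_nonneg (norm_nonneg w) k)]

lemma summable_ac_nat (r : ℂ) {w : ℂ} (hw : ‖w‖ < 1) :
    Summable (fun k : ℕ => ac r k * k * w ^ k) := by
  have := summable_ac_mul r 0 hw
  simpa using this

open Complex Metric in
lemma key (r : ℂ) {z : ℂ} (hz : ‖z‖ < 1) :
    HasSum (fun k : ℕ => ac r k * z ^ k) ((1 - z) ^ (-r)) := by
  set ρ : ℝ := (‖z‖ + 1) / 2 with hρ
  have hρ0 : 0 < ρ := by positivity
  have hρ1 : ρ < 1 := by rw [hρ]; linarith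
  have hzρ : ‖z‖ < ρ := by rw [hρ]; linarith
  set t : Set ℂ := ball (0:ℂ) ρ with ht_def
  have ht : IsOpen t := isOpen_ball
  have hmem : ∀ w ∈ t, ‖w‖ < ρ := by
    intro w hw
    simpa [ht_def, dist_eq_norm] using hw
  have hzt : z ∈ t := by simpa [ht_def, dist_eq_norm] using hzρ
  have h0t : (0:ℂ) ∈ t := by simpa [ht_def] using hρ0
  -- the summable bound for derivatives
  set v : ℕ → ℝ := fun k => (‖r‖+1) * ((k:ℝ) * ‖ac r (k-1)‖ * ρ ^ (k-1)) with hv_def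
  have hv : Summable v := by
    rw [← summable_nat_add_iff 1]
    have : (fun n : ℕ => v (n+1)) = fun n : ℕ => (‖r‖+1) * (((n:ℝ)+1) * ‖ac r n‖ * ρ ^ n) := by
      funext n
      simp only [hv_def, Nat.add_sub_cancel]
      push_cast
      ring
    rw [this]
    exact (master r hρ0.le hρ1).mul_left _
  set F : ℂ → ℂ := fun w => ∑' k : ℕ, ac r k * w ^ k with hF_def
  have hder : ∀ (k : ℕ) (w : ℂ), w ∈ t →
      HasDerivAt (fun w => ac r k * w ^ k) (ac r k * (k * w ^ (k-1))) w :=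
    fun k w _ => (hasDerivAt_pow k w).const_mul _
  have hbound : ∀ (k : ℕ) (w : ℂ), w ∈ t → ‖ac r k * ((k:ℂ) * w ^ (k-1))‖ ≤ v k := by
    intro k w hw
    match k with
    | 0 => simp [hv_def]
    | (k+1) =>
      have hwρ : ‖w‖ ≤ ρ := (hmem w hw).le
      rw [norm_mul, norm_mul, norm_pow]
      simp only [Nat.add_sub_cancel, hv_def]
      have h1 : ‖((k:ℂ)+1)‖ = (k:ℝ)+1 := by
        rw [show ((k:ℂ)+1) = ((k+1:ℕ):ℂ) by push_cast; ring, Complex.norm_natCast]; push_cast; ring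
      push_cast
      rw [h1]
      have h2 : ‖ac r (k+1)‖ * ((k:ℝ)+1) = ‖ac r k‖ * ‖r + k‖ := norm_ac_succ r k
      have h3 : ‖r + (k:ℂ)‖ ≤ (‖r‖+1) * ((k:ℝ)+1) := by
        have := norm_add_le r (k:ℂ)
        have h4 : ‖(k:ℂ)‖ = (k:ℝ) := by simp
        nlinarith [norm_nonneg r, Nat.cast_nonneg (α := ℝ) k]
      have h5 : ‖w‖ ^ k ≤ ρ ^ k := pow_le_pow_left₀ (norm_nonneg w) hwρ k
      calc ‖ac r (k+1)‖ * (((k:ℝ)+1) * ‖w‖ ^ k) = (‖ac r (k+1)‖ * ((k:ℝ)+1)) * ‖w‖ ^ k := by ring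
        _ = ‖ac r k‖ * ‖r + (k:ℂ)‖ * ‖w‖ ^ k := by rw [h2]
        _ ≤ ‖ac r k‖ * ((‖r‖+1) * ((k:ℝ)+1)) * ρ ^ k := by
            apply mul_le_mul (mul_le_mul_of_nonneg_left h3 (norm_nonneg _)) h5
              (by positivity) (by positivity)
        _ = (‖r‖+1) * (((k:ℝ)+1) * ‖ac r k‖ * ρ ^ k) := by ring
  have hg0 : Summable fun k : ℕ => ac r k * (0:ℂ) ^ k := summable_ac r (by simp)
  have hF : ∀ w ∈ t, HasDerivAt F (∑' k : ℕ, ac r k * ((k:ℂ) * w ^ (k-1))) w := by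
    intro w hw
    exact hasDerivAt_tsum_of_isPreconnected hv ht (convex_ball _ _).isPreconnected
      hder hbound h0t hg0 hw
  -- simplify the derivative
  have hDsimp : ∀ w ∈ t, (∑' k : ℕ, ac r k * ((k:ℂ) * w ^ (k-1)))
      = ∑' k : ℕ, ac r k * (r + k) * w ^ k := by
    intro w hw
    have hsum : Summable fun k : ℕ => ac r k * ((k:ℂ) * w ^ (k-1)) :=
      Summable.of_norm (Summable.of_nonneg_of_le (fun k => norm_nonneg _)
        (fun k => hbound k w hw) hv)
    rw [Summable.tsum_eq_zero_add hsum]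
    simp only [Nat.cast_zero, zero_mul, mul_zero, zero_add, Nat.add_sub_cancel]
    apply tsum_congr
    intro k
    push_cast
    calc ac r (k+1) * (((k:ℂ)+1) * w ^ k) = (ac r (k+1) * ((k:ℂ)+1)) * w ^ k := by ring
      _ = (ac r k * (r + (k:ℂ))) * w ^ k := by rw [ac_succ]
      _ = ac r k * (r + (k:ℂ)) * w ^ k := by ring
  -- the ODE
  have hw1 : ∀ w ∈ t, ‖w‖ < 1 := fun w hw => (hmem w hw).trans hρ1
  have hODE : ∀ w ∈ t, (1 - w) * (∑' k : ℕ, ac r k * (r + k) * w ^ k) = r * F w := by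
    intro w hw
    have hw' := hw1 w hw
    have SD : Summable fun k : ℕ => ac r k * (r + k) * w ^ k := summable_ac_mul r r hw'
    have SF : Summable fun k : ℕ => ac r k * w ^ k := summable_ac r hw'
    have SN : Summable fun k : ℕ => ac r k * (k:ℂ) * w ^ k := summable_ac_nat r hw'
    have h1 : (∑' k : ℕ, ac r k * (r + k) * w ^ k) - r * F w
        = ∑' k : ℕ, ac r k * (k:ℂ) * w ^ k := by
      rw [hF_def, ← tsum_mul_left (a := r), ← Summable.tsum_sub SD (SF.mul_left r)]
      apply tsum_congr; intro k; ring
    have h2 : w * (∑' k : ℕ, ac r k * (r + k) * w ^ k)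
        = ∑' k : ℕ, ac r k * (k:ℂ) * w ^ k := by
      rw [← tsum_mul_left (a := w)]
      rw [Summable.tsum_eq_zero_add SN]
      simp only [Nat.cast_zero, mul_zero, zero_mul, zero_add]
      apply tsum_congr
      intro k
      have e1 : w * (ac r k * (r + k) * w ^ k) = (ac r k * (r + k)) * w ^ (k+1) := by ring
      rw [e1, ← ac_succ r k]
      push_cast
      ring
    have h3 := h1
    rw [← h2] at h3
    linear_combination h3
  -- G is locally constant
  set G : ℂ → ℂ := fun w => F w * (1 - w) ^ (r : ℂ) with hG_def
  have hslit : ∀ w ∈ t, (1 - w) ∈ Complex.slitPlane := by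
    intro w hw
    left
    have h1 : w.re ≤ ‖w‖ := (abs_le.mp (Complex.abs_re_le_norm w)).2
    have := hw1 w hw
    simp only [Complex.sub_re, Complex.one_re]
    linarith
  have hne : ∀ w ∈ t, (1 - w) ≠ 0 := fun w hw => Complex.slitPlane_ne_zero (hslit w hw)
  have hG : ∀ w ∈ t, HasDerivAt G 0 w := by
    intro w hw
    have hc : HasDerivAt (fun w : ℂ => (1 - w) ^ (r : ℂ))
        (r * (1 - w) ^ (r - 1) * (-1)) w :=
      HasDerivAt.cpow_const ((hasDerivAt_id w).const_sub 1) (hslit w hw)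
    have hmul := (hF w hw).mul hc
    rw [hDsimp w hw] at hmul
    refine hmul.congr_deriv (Eq.symm ?_)
    have hpow : (1 - w) ^ ((r : ℂ) - 1) = (1 - w) ^ (r : ℂ) / (1 - w) := by
      rw [Complex.cpow_sub _ _ (hne w hw), Complex.cpow_one]
    have hode := hODE w hw
    rw [hpow]
    have hnw := hne w hw
    field_simp
    linear_combination (-(1 - w) ^ (r:ℂ)) * hode
  have hGdiff : DifferentiableOn ℂ G t :=
    fun w hw => ((hG w hw).differentiableAt).differentiableWithinAt
  have hfz : ∀ w ∈ t, fderivWithin ℂ G t w = 0 := by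
    intro w hw
    rw [fderivWithin_of_isOpen ht hw]
    have h0 : HasFDerivAt G (0 : ℂ →L[ℂ] ℂ) w := by
      simpa using (hG w hw).hasFDerivAt
    exact h0.fderiv
  have hconst : G z = G 0 :=
    (convex_ball (0:ℂ) ρ).is_const_of_fderivWithin_eq_zero hGdiff hfz hzt h0t
  have hF0 : F 0 = 1 := by
    have he : F 0 = ∑' k : ℕ, ac r k * (0:ℂ) ^ k := rfl
    rw [he, tsum_eq_single 0 (fun k hk => by simp [zero_pow hk])]
    simp [ac, poch]
  have hG0 : G 0 = 1 := by
    simp [hG_def, hF0]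
  have hkey : F z * (1 - z) ^ (r : ℂ) = 1 := by
    rw [show F z * (1 - z) ^ (r : ℂ) = G z from rfl, hconst, hG0]
  have hnez : (1 - z) ≠ 0 := hne z hzt
  have hpne : (1 - z) ^ (r : ℂ) ≠ 0 := by
    rw [Complex.cpow_def_of_ne_zero hnez]
    exact Complex.exp_ne_zero _
  have hFz : F z = (1 - z) ^ (-r) := by
    rw [Complex.cpow_neg]
    field_simp
    linear_combination hkey
  rw [← hFz]
  exact (summable_ac r hz).hasSum

lemma sum_antidiag {K : Type*} [Field K] [CharZero K] (c u v : K) (k : ℕ) :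
    ∑ p ∈ Finset.HasAntidiagonal.antidiagonal k, c / ((Nat.factorial p.1 : K) * (Nat.factorial p.2 : K)) * u ^ p.1 * v ^ p.2
      = c / (Nat.factorial k : K) * (u + v) ^ k := by
  rw [Finset.Nat.sum_antidiagonal_eq_sum_range_succ_mk, add_pow, Finset.mul_sum]
  apply Finset.sum_congr rfl
  intro m hm
  have hmk : m ≤ k := Nat.lt_succ_iff.mp (Finset.mem_range.mp hm)
  have hfact : ((k.choose m : K)) * (Nat.factorial m : K) * (Nat.factorial (k - m) : K)
      = (Nat.factorial k : K) := by
    exact_mod_cast congrArg (Nat.cast (R := K)) (Nat.choose_mul_factorial_mul_factorial hmk)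
  have h1 : (Nat.factorial m : K) ≠ 0 := Nat.cast_ne_zero.2 (Nat.factorial_ne_zero _)
  have h2 : (Nat.factorial (k - m) : K) ≠ 0 := Nat.cast_ne_zero.2 (Nat.factorial_ne_zero _)
  have h3 : (Nat.factorial k : K) ≠ 0 := Nat.cast_ne_zero.2 (Nat.factorial_ne_zero _)
  field_simp
  linear_combination (-(c * u ^ m * v ^ (k - m))) * hfact


lemma norm_f (r x y : ℂ) (k m n : ℕ) (hp : m + n = k) :
    ‖poch r (m + n) / ((Nat.factorial m : ℂ) * (Nat.factorial n : ℂ)) * x ^ m * y ^ n‖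
      = ‖poch r k‖ / ((Nat.factorial m : ℝ) * (Nat.factorial n : ℝ)) * ‖x‖ ^ m * ‖y‖ ^ n := by
  subst hp
  rw [norm_mul, norm_mul, norm_div, norm_mul, norm_pow, norm_pow,
    Complex.norm_natCast, Complex.norm_natCast]

theorem appell_F2_special (r x y : ℂ) (hxy : ‖x‖ + ‖y‖ < 1) :
    HasSum
      (fun mn : ℕ × ℕ =>
        poch r (mn.1 + mn.2) / ((Nat.factorial mn.1 : ℂ) * (Nat.factorial mn.2 : ℂ)) * x ^ mn.1 * y ^ mn.2)
      ((1 - x - y) ^ (-r)) := by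
  have hxy' : ‖x‖ + ‖y‖ < 1 := by simpa using hxy
  have hs0 : (0:ℝ) ≤ ‖x‖ + ‖y‖ := by positivity
  have hz : ‖x + y‖ < 1 := lt_of_le_of_lt (norm_add_le x y) hxy'
  have hkey : HasSum (fun k : ℕ => ac r k * (x + y) ^ k) ((1 - (x + y)) ^ (-r)) := key r hz
  -- fiber norm sums
  have hfibnorm : ∀ k : ℕ, (∑ p ∈ Finset.HasAntidiagonal.antidiagonal k,
      ‖poch r (p.1 + p.2) / ((Nat.factorial p.1 : ℂ) * (Nat.factorial p.2 : ℂ)) * x ^ p.1 * y ^ p.2‖)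
      = ‖ac r k‖ * (‖x‖ + ‖y‖) ^ k := by
    intro k
    rw [Finset.sum_congr rfl
      (fun p hp => norm_f r x y k p.1 p.2 (Finset.HasAntidiagonal.mem_antidiagonal.mp hp))]
    rw [sum_antidiag (‖poch r k‖) ‖x‖ ‖y‖ k]
    rw [ac, norm_div, Complex.norm_natCast]
  -- fiber value sums
  have hfibval : ∀ k : ℕ, (∑ p ∈ Finset.HasAntidiagonal.antidiagonal k,
      poch r (p.1 + p.2) / ((Nat.factorial p.1 : ℂ) * (Nat.factorial p.2 : ℂ)) * x ^ p.1 * y ^ p.2)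
      = ac r k * (x + y) ^ k := by
    intro k
    have hcongr : ∀ p ∈ Finset.HasAntidiagonal.antidiagonal k,
        poch r (p.1 + p.2) / ((Nat.factorial p.1 : ℂ) * (Nat.factorial p.2 : ℂ)) * x ^ p.1 * y ^ p.2
          = poch r k / ((Nat.factorial p.1 : ℂ) * (Nat.factorial p.2 : ℂ)) * x ^ p.1 * y ^ p.2 := by
      intro p hp
      rw [Finset.HasAntidiagonal.mem_antidiagonal.mp hp]
    rw [Finset.sum_congr rfl hcongr, sum_antidiag (poch r k) x y k, ac]
  -- the sigma-type setup
  refine (Finset.HasAntidiagonal.sigmaAntidiagonalEquivProd (A := ℕ)).hasSum_iff.mp ?_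
  set g : (Σ n : ℕ, ↥(Finset.HasAntidiagonal.antidiagonal n)) → ℂ := fun p =>
    poch r ((p.2 : ℕ × ℕ).1 + (p.2 : ℕ × ℕ).2)
      / ((Nat.factorial (p.2 : ℕ × ℕ).1 : ℂ) * (Nat.factorial (p.2 : ℕ × ℕ).2 : ℂ))
      * x ^ (p.2 : ℕ × ℕ).1 * y ^ (p.2 : ℕ × ℕ).2 with hg_def
  have hsummable : Summable g := by
    apply Summable.of_norm
    apply (summable_sigma_of_nonneg (fun _ => norm_nonneg _)).mpr
    refine ⟨fun k => (hasSum_fintype _).summable, ?_⟩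
    have heval : ∀ k : ℕ, (∑' p : ↥(Finset.HasAntidiagonal.antidiagonal k), ‖g ⟨k, p⟩‖)
        = ‖ac r k‖ * (‖x‖ + ‖y‖) ^ k := by
      intro k
      rw [tsum_fintype, Finset.sum_coe_sort (Finset.HasAntidiagonal.antidiagonal k)
        (fun p : ℕ × ℕ => ‖poch r (p.1 + p.2)
          / ((Nat.factorial p.1 : ℂ) * (Nat.factorial p.2 : ℂ)) * x ^ p.1 * y ^ p.2‖)]
      exact hfibnorm k
    simp_rw [heval]
    apply Summable.of_nonneg_of_le (fun k => by positivity) _ (master r hs0 hxy')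
    intro k
    have h1 : (0:ℝ) ≤ ‖ac r k‖ * (‖x‖ + ‖y‖) ^ k := by positivity
    nlinarith [Nat.cast_nonneg (α := ℝ) k]
  have hfib : ∀ k : ℕ, HasSum (fun p : ↥(Finset.HasAntidiagonal.antidiagonal k) => g ⟨k, p⟩)
      (ac r k * (x + y) ^ k) := by
    intro k
    have h := hasSum_fintype (fun p : ↥(Finset.HasAntidiagonal.antidiagonal k) => g ⟨k, p⟩)
    rwa [Finset.sum_coe_sort (Finset.HasAntidiagonal.antidiagonal k)
        (fun p : ℕ × ℕ => poch r (p.1 + p.2)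
          / ((Nat.factorial p.1 : ℂ) * (Nat.factorial p.2 : ℂ)) * x ^ p.1 * y ^ p.2),
      hfibval k] at h
  have hsig : HasSum g (∑' p, g p) := hsummable.hasSum
  have hsum2 : HasSum (fun k : ℕ => ac r k * (x + y) ^ k) (∑' p, g p) := hsig.sigma hfib
  have hval : (∑' p, g p) = (1 - (x + y)) ^ (-r) := hsum2.unique hkey
  rw [hval] at hsig
  rw [show (1:ℂ) - x - y = 1 - (x + y) by ring]
  exact hsig
end

section
/- For complex x, y with |x/y| < 1, |y| < 1, y ≠ 0 and complex w with |w/y| < 1: ∑_{α_2 ≥ 0, α_3 ≥ 0, k ≥ 0} (α_3+1)(k + α_2 + α_3 + 3) Γ(k + α_2 + 2)/(Γ(α_2+1) Γ(k+1)) · y^{k−2} (x/y)^{α_2} (w/y)^{α_3} equals y^{−2} times [ (w/y + 1)/(1 − w/y)³ · 1/(1 − y − x/y)² + 1/(1 − w/y)² · 2/(1 − y − x/y)³ ] (assuming also |y| + |x/y| < 1). -/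
open Real

variable {K : Type*} [NormedField K] [CompleteSpace K] [CharZero K]

lemma aux_hasSum_one {r : K} (hr : ‖r‖ < 1) :
    HasSum (fun n : ℕ => ((n : K) + 1) * r ^ n) (1 / (1 - r) ^ 2) := by
  have h := hasSum_choose_mul_geometric_of_norm_lt_one 1 hr
  refine h.congr_fun fun n => ?_
  simp [Nat.choose_one_right]

lemma aux_hasSum_two {r : K} (hr : ‖r‖ < 1) :
    HasSum (fun n : ℕ => ((n : K) + 1) * ((n : K) + 2) * r ^ n) (2 / (1 - r) ^ 3) := by
  have h := (hasSum_choose_mul_geometric_of_norm_lt_one 2 hr).mul_left 2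
  have h2 : (2 : K) * (1 / (1 - r) ^ (2 + 1)) = 2 / (1 - r) ^ 3 := by ring
  rw [h2] at h
  refine h.congr_fun fun n => ?_
  have h3 : ((n + 2).choose 2 : K) = ((n + 2 : ℕ) : K) * (((n + 2 : ℕ) : K) - 1) / 2 :=
    Nat.cast_choose_two K (n + 2)
  push_cast at h3
  push_cast
  rw [h3]
  ring

lemma aux_hasSum_sq {r : K} (hr : ‖r‖ < 1) :
    HasSum (fun n : ℕ => ((n : K) + 1) ^ 2 * r ^ n) ((1 + r) / (1 - r) ^ 3) := by
  have hne : (1 : K) - r ≠ 0 := by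
    intro h
    rw [sub_eq_zero] at h
    rw [← h] at hr
    simp at hr
  have h := (aux_hasSum_two hr).sub (aux_hasSum_one hr)
  have hv : 2 / (1 - r) ^ 3 - 1 / (1 - r) ^ 2 = (1 + r) / (1 - r) ^ 3 := by
    field_simp
    ring
  rw [hv] at h
  refine h.congr_fun fun n => ?_
  ring

lemma aux_hasSum_prod {β γ : Type*} {f : β × γ → ℂ} {g : β → ℂ} {s : ℂ}
    (hf : Summable f) (hfib : ∀ b, HasSum (fun c => f (b, c)) (g b)) (hg : HasSum g s) :
    HasSum f s := by
  obtain ⟨s', hs'⟩ := hf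
  rwa [hg.unique (hs'.prod_fiberwise hfib)]

section Double

variable {u y : ℂ}

lemma aux_basic (hy : ‖y‖ < 1) (hsum : ‖y‖ + ‖u‖ < 1) :
    ‖u / (1 - y)‖ < 1 ∧ (1 : ℂ) - y ≠ 0 ∧ (1 : ℂ) - y - u ≠ 0 ∧
      ‖u‖ / (1 - ‖y‖) < 1 ∧ (0 : ℝ) < 1 - ‖y‖ := by
  have h1 : (0 : ℝ) < 1 - ‖y‖ := by linarith
  have h2 : 1 - ‖y‖ ≤ ‖(1 : ℂ) - y‖ := by
    have := norm_sub_norm_le (1 : ℂ) y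
    simpa using this
  have h1y : (1 : ℂ) - y ≠ 0 := by
    intro h
    rw [sub_eq_zero] at h
    rw [← h] at hy
    simp at hy
  have hS : ‖u / (1 - y)‖ < 1 := by
    rw [norm_div]
    rw [div_lt_one (by linarith)]
    linarith
  have hSr : ‖u‖ / (1 - ‖y‖) < 1 := by
    rw [div_lt_one h1]
    linarith
  have h1yu : (1 : ℂ) - y - u ≠ 0 := by
    intro h
    have : (1 : ℂ) - (y + u) = 0 := by rw [← h]; ring
    rw [sub_eq_zero] at this
    have h4 := congrArg norm this
    rw [norm_one] at h4
    have hb := norm_add_le y u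
    linarith
  exact ⟨hS, h1y, h1yu, hSr, h1⟩

lemma aux_D2_norm_summable (hy : ‖y‖ < 1) (hsum : ‖y‖ + ‖u‖ < 1) :
    Summable (fun p : ℕ × ℕ =>
      ‖((p.1 : ℂ) + 1) * (((p.2 + (p.1 + 1)).choose (p.1 + 1) : ℕ) : ℂ) * u ^ p.1 * y ^ p.2‖) := by
  obtain ⟨hS, h1y, h1yu, hSr, h1⟩ := aux_basic hy hsum
  set U := ‖u‖ with hU
  set Y := ‖y‖ with hY
  have hYr : ‖Y‖ < 1 := by rw [Real.norm_eq_abs, abs_of_nonneg (norm_nonneg y)]; exact hy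
  have hnorm : ∀ p : ℕ × ℕ,
      ‖((p.1 : ℂ) + 1) * (((p.2 + (p.1 + 1)).choose (p.1 + 1) : ℕ) : ℂ) * u ^ p.1 * y ^ p.2‖ =
        ((p.1 : ℝ) + 1) * (((p.2 + (p.1 + 1)).choose (p.1 + 1) : ℕ) : ℝ) * U ^ p.1 * Y ^ p.2 := by
    intro p
    rw [show ((p.1 : ℂ) + 1) = (((p.1 + 1 : ℕ)) : ℂ) by push_cast; ring]
    simp only [norm_mul, norm_pow, Complex.norm_natCast]
    push_cast
    ring
  rw [funext hnorm]
  have hSrnorm : ‖U / (1 - Y)‖ < 1 := by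
    rw [Real.norm_eq_abs, abs_of_nonneg (by positivity)]
    exact hSr
  apply (summable_prod_of_nonneg ?_).mpr
  constructor
  · intro a
    apply Summable.congr (((summable_choose_mul_geometric_of_norm_lt_one (a + 1) hYr)).mul_left
      (((a : ℝ) + 1) * U ^ a))
    intro k
    ring
  · have hts : ∀ a : ℕ, ∑' k : ℕ,
        ((a : ℝ) + 1) * (((k + (a + 1)).choose (a + 1) : ℕ) : ℝ) * U ^ a * Y ^ k =
        (1 / (1 - Y) ^ 2) * (((a : ℝ) + 1) * (U / (1 - Y)) ^ a) := by
      intro a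
      have := tsum_choose_mul_geometric_of_norm_lt_one (a + 1) hYr
      calc ∑' k : ℕ, ((a : ℝ) + 1) * (((k + (a + 1)).choose (a + 1) : ℕ) : ℝ) * U ^ a * Y ^ k
          = ∑' k : ℕ, (((a : ℝ) + 1) * U ^ a) * ((((k + (a + 1)).choose (a + 1) : ℕ) : ℝ) * Y ^ k) := by
            apply tsum_congr; intro k; ring
        _ = (((a : ℝ) + 1) * U ^ a) * (1 / (1 - Y) ^ (a + 1 + 1)) := by
            rw [tsum_mul_left, this]
        _ = (1 / (1 - Y) ^ 2) * (((a : ℝ) + 1) * (U / (1 - Y)) ^ a) := by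
            rw [show (U / (1 - Y)) ^ a = U ^ a * ((1 - Y) ^ a)⁻¹ by
              rw [div_pow, div_eq_mul_inv]]
            rw [show (1 : ℝ) / (1 - Y) ^ (a + 1 + 1) = ((1 - Y) ^ a)⁻¹ * ((1 - Y) ^ 2)⁻¹ by
              rw [show (1 - Y) ^ (a + 1 + 1) = (1 - Y) ^ a * (1 - Y) ^ 2 by ring, one_div,
                mul_inv]]
            rw [one_div]
            ring
    apply Summable.congr ((((aux_hasSum_one hSrnorm).summable)).mul_left (1 / (1 - Y) ^ 2))
    intro a
    rw [hts a]
  · intro p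
    positivity

lemma aux_D2_hasSum (hy : ‖y‖ < 1) (hsum : ‖y‖ + ‖u‖ < 1) :
    HasSum (fun p : ℕ × ℕ =>
      ((p.1 : ℂ) + 1) * (((p.2 + (p.1 + 1)).choose (p.1 + 1) : ℕ) : ℂ) * u ^ p.1 * y ^ p.2)
      (1 / (1 - y - u) ^ 2) := by
  obtain ⟨hS, h1y, h1yu, hSr, h1⟩ := aux_basic hy hsum
  have hsummC : Summable (fun p : ℕ × ℕ =>
      ((p.1 : ℂ) + 1) * (((p.2 + (p.1 + 1)).choose (p.1 + 1) : ℕ) : ℂ) * u ^ p.1 * y ^ p.2) :=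
    (aux_D2_norm_summable hy hsum).of_norm
  refine aux_hasSum_prod (f := fun p : ℕ × ℕ =>
      ((p.1 : ℂ) + 1) * (((p.2 + (p.1 + 1)).choose (p.1 + 1) : ℕ) : ℂ) * u ^ p.1 * y ^ p.2)
    hsummC
    (g := fun a => ((a : ℂ) + 1) * u ^ a * (1 / (1 - y) ^ (a + 2))) (fun a => ?_) ?_
  · 
    apply HasSum.congr_fun (((hasSum_choose_mul_geometric_of_norm_lt_one (a + 1) hy)).mul_left
      (((a : ℂ) + 1) * u ^ a))
    intro k
    ring
  · have h := (aux_hasSum_one hS).mul_left (1 / (1 - y) ^ 2)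
    have hval : (1 / (1 - y) ^ 2) * (1 / (1 - u / (1 - y)) ^ 2) = 1 / (1 - y - u) ^ 2 := by
      have he : (1 : ℂ) - u / (1 - y) = (1 - y - u) / (1 - y) := by field_simp
      rw [he, div_pow]
      field_simp
    rw [hval] at h
    apply h.congr_fun
    intro a
    rw [show (u / (1 - y)) ^ a = u ^ a * ((1 - y) ^ a)⁻¹ by rw [div_pow, div_eq_mul_inv]]
    rw [show (1 : ℂ) / (1 - y) ^ (a + 2) = ((1 - y) ^ a)⁻¹ * ((1 - y) ^ 2)⁻¹ by
      rw [show (1 - y) ^ (a + 2) = (1 - y) ^ a * (1 - y) ^ 2 by ring, one_div, mul_inv]]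
    rw [one_div]
    ring

end Double

section Double3

variable {u y : ℂ}

lemma aux_D3_norm_summable (hy : ‖y‖ < 1) (hsum : ‖y‖ + ‖u‖ < 1) :
    Summable (fun p : ℕ × ℕ =>
      ‖((p.1 : ℂ) + 1) * ((p.1 : ℂ) + 2) *
        (((p.2 + (p.1 + 2)).choose (p.1 + 2) : ℕ) : ℂ) * u ^ p.1 * y ^ p.2‖) := by
  obtain ⟨hS, h1y, h1yu, hSr, h1⟩ := aux_basic hy hsum
  set U := ‖u‖ with hU
  set Y := ‖y‖ with hY
  have hYr : ‖Y‖ < 1 := by rw [Real.norm_eq_abs, abs_of_nonneg (norm_nonneg y)]; exact hy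
  have hnorm : ∀ p : ℕ × ℕ,
      ‖((p.1 : ℂ) + 1) * ((p.1 : ℂ) + 2) *
          (((p.2 + (p.1 + 2)).choose (p.1 + 2) : ℕ) : ℂ) * u ^ p.1 * y ^ p.2‖ =
        ((p.1 : ℝ) + 1) * ((p.1 : ℝ) + 2) *
          (((p.2 + (p.1 + 2)).choose (p.1 + 2) : ℕ) : ℝ) * U ^ p.1 * Y ^ p.2 := by
    intro p
    rw [show ((p.1 : ℂ) + 1) = (((p.1 + 1 : ℕ)) : ℂ) by push_cast; ring]
    rw [show ((p.1 : ℂ) + 2) = (((p.1 + 2 : ℕ)) : ℂ) by push_cast; ring]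
    simp only [norm_mul, norm_pow, Complex.norm_natCast]
    push_cast
    ring
  rw [funext hnorm]
  have hSrnorm : ‖U / (1 - Y)‖ < 1 := by
    rw [Real.norm_eq_abs, abs_of_nonneg (by positivity)]
    exact hSr
  apply (summable_prod_of_nonneg ?_).mpr
  constructor
  · intro a
    apply Summable.congr (((summable_choose_mul_geometric_of_norm_lt_one (a + 2) hYr)).mul_left
      (((a : ℝ) + 1) * ((a : ℝ) + 2) * U ^ a))
    intro k
    ring
  · have hts : ∀ a : ℕ, ∑' k : ℕ,
        ((a : ℝ) + 1) * ((a : ℝ) + 2) * (((k + (a + 2)).choose (a + 2) : ℕ) : ℝ) * U ^ a * Y ^ k =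
        (1 / (1 - Y) ^ 3) * (((a : ℝ) + 1) * ((a : ℝ) + 2) * (U / (1 - Y)) ^ a) := by
      intro a
      have := tsum_choose_mul_geometric_of_norm_lt_one (a + 2) hYr
      calc ∑' k : ℕ, ((a : ℝ) + 1) * ((a : ℝ) + 2) *
              (((k + (a + 2)).choose (a + 2) : ℕ) : ℝ) * U ^ a * Y ^ k
          = ∑' k : ℕ, (((a : ℝ) + 1) * ((a : ℝ) + 2) * U ^ a) *
              ((((k + (a + 2)).choose (a + 2) : ℕ) : ℝ) * Y ^ k) := by
            apply tsum_congr; intro k; ring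
        _ = (((a : ℝ) + 1) * ((a : ℝ) + 2) * U ^ a) * (1 / (1 - Y) ^ (a + 2 + 1)) := by
            rw [tsum_mul_left, this]
        _ = (1 / (1 - Y) ^ 3) * (((a : ℝ) + 1) * ((a : ℝ) + 2) * (U / (1 - Y)) ^ a) := by
            rw [show (U / (1 - Y)) ^ a = U ^ a * ((1 - Y) ^ a)⁻¹ by
              rw [div_pow, div_eq_mul_inv]]
            rw [show (1 : ℝ) / (1 - Y) ^ (a + 2 + 1) = ((1 - Y) ^ a)⁻¹ * ((1 - Y) ^ 3)⁻¹ by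
              rw [show (1 - Y) ^ (a + 2 + 1) = (1 - Y) ^ a * (1 - Y) ^ 3 by ring, one_div,
                mul_inv]]
            rw [one_div]
            ring
    apply Summable.congr ((((aux_hasSum_two hSrnorm).summable)).mul_left (1 / (1 - Y) ^ 3))
    intro a
    rw [hts a]
  · intro p
    positivity

lemma aux_D3_hasSum (hy : ‖y‖ < 1) (hsum : ‖y‖ + ‖u‖ < 1) :
    HasSum (fun p : ℕ × ℕ =>
      ((p.1 : ℂ) + 1) * ((p.1 : ℂ) + 2) *
        (((p.2 + (p.1 + 2)).choose (p.1 + 2) : ℕ) : ℂ) * u ^ p.1 * y ^ p.2)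
      (2 / (1 - y - u) ^ 3) := by
  obtain ⟨hS, h1y, h1yu, hSr, h1⟩ := aux_basic hy hsum
  have hsummC : Summable (fun p : ℕ × ℕ =>
      ((p.1 : ℂ) + 1) * ((p.1 : ℂ) + 2) *
        (((p.2 + (p.1 + 2)).choose (p.1 + 2) : ℕ) : ℂ) * u ^ p.1 * y ^ p.2) :=
    (aux_D3_norm_summable hy hsum).of_norm
  refine aux_hasSum_prod (f := fun p : ℕ × ℕ =>
      ((p.1 : ℂ) + 1) * ((p.1 : ℂ) + 2) *
        (((p.2 + (p.1 + 2)).choose (p.1 + 2) : ℕ) : ℂ) * u ^ p.1 * y ^ p.2)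
    hsummC
    (g := fun a => ((a : ℂ) + 1) * ((a : ℂ) + 2) * u ^ a * (1 / (1 - y) ^ (a + 3)))
    (fun a => ?_) ?_
  · apply HasSum.congr_fun (((hasSum_choose_mul_geometric_of_norm_lt_one (a + 2) hy)).mul_left
      (((a : ℂ) + 1) * ((a : ℂ) + 2) * u ^ a))
    intro k
    ring
  · have h := (aux_hasSum_two hS).mul_left (1 / (1 - y) ^ 3)
    have hval : (1 / (1 - y) ^ 3) * (2 / (1 - u / (1 - y)) ^ 3) = 2 / (1 - y - u) ^ 3 := by
      have he : (1 : ℂ) - u / (1 - y) = (1 - y - u) / (1 - y) := by field_simp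
      rw [he, div_pow]
      field_simp
    rw [hval] at h
    apply h.congr_fun
    intro a
    rw [show (u / (1 - y)) ^ a = u ^ a * ((1 - y) ^ a)⁻¹ by rw [div_pow, div_eq_mul_inv]]
    rw [show (1 : ℂ) / (1 - y) ^ (a + 3) = ((1 - y) ^ a)⁻¹ * ((1 - y) ^ 3)⁻¹ by
      rw [show (1 - y) ^ (a + 3) = (1 - y) ^ a * (1 - y) ^ 3 by ring, one_div, mul_inv]]
    rw [one_div]
    ring

end Double3

def auxTripleEquiv : (ℕ × ℕ × ℕ) ≃ ℕ × (ℕ × ℕ) :=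
  ⟨fun t => (t.2.1, (t.1, t.2.2)), fun p => (p.2.1, p.1, p.2.2), fun _ => rfl, fun _ => rfl⟩

set_option maxHeartbeats 1000000 in
theorem D2_reindexed_series (x y w : ℂ) (hy0 : y ≠ 0)
    (hxy : ‖x / y‖ < 1) (hy : ‖y‖ < 1)
    (hw : ‖w / y‖ < 1)
    (hsum : ‖y‖ + ‖x / y‖ < 1) :
    HasSum
      (fun t : ℕ × ℕ × ℕ =>
        ((t.2.1 : ℂ) + 1) * ((t.2.2 : ℂ) + t.1 + t.2.1 + 3) *
            Complex.Gamma ((t.2.2 : ℂ) + t.1 + 2) /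
            (Complex.Gamma ((t.1 : ℂ) + 1) * Complex.Gamma ((t.2.2 : ℂ) + 1)) *
          y ^ ((t.2.2 : ℤ) - 2) * (x / y) ^ t.1 * (w / y) ^ t.2.1)
      (y ^ (-2 : ℤ) *
        ((w / y + 1) / (1 - w / y) ^ 3 * (1 / (1 - y - x / y) ^ 2) +
          1 / (1 - w / y) ^ 2 * (2 / (1 - y - x / y) ^ 3))) := by
  rw [show w / y + 1 = 1 + w / y from add_comm _ _]
  set u := x / y with hu
  set v := w / y with hv'
  have hxy' : ‖u‖ < 1 := hxy
  have hy' : ‖y‖ < 1 := hy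
  have hw' : ‖v‖ < 1 := hw
  have hsum' : ‖y‖ + ‖u‖ < 1 := hsum
  have hVr : ‖(‖v‖)‖ < 1 := by rwa [norm_norm]
  -- single sums in v
  have hB : HasSum (fun b : ℕ => ((b : ℂ) + 1) * v ^ b) (1 / (1 - v) ^ 2) :=
    aux_hasSum_one hw'
  have hC : HasSum (fun b : ℕ => ((b : ℂ) + 1) ^ 2 * v ^ b) ((1 + v) / (1 - v) ^ 3) :=
    aux_hasSum_sq hw'
  have nB : Summable (fun b : ℕ => ‖((b : ℂ) + 1) * v ^ b‖) := by
    apply Summable.congr (aux_hasSum_one hVr).summable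
    intro b
    rw [norm_mul, norm_pow, show ((b : ℂ) + 1) = (((b + 1 : ℕ)) : ℂ) by push_cast; ring,
      Complex.norm_natCast]
    push_cast
    ring
  have nC : Summable (fun b : ℕ => ‖((b : ℂ) + 1) ^ 2 * v ^ b‖) := by
    apply Summable.congr (aux_hasSum_sq hVr).summable
    intro b
    rw [norm_mul, norm_pow, norm_pow, show ((b : ℂ) + 1) = (((b + 1 : ℕ)) : ℂ) by push_cast; ring,
      Complex.norm_natCast]
    push_cast
    ring
  -- double sums
  have hD2 := aux_D2_hasSum (u := u) (y := y) hy' hsum'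
  have hD3 := aux_D3_hasSum (u := u) (y := y) hy' hsum'
  have nD2 := aux_D2_norm_summable (u := u) (y := y) hy' hsum'
  have nD3 := aux_D3_norm_summable (u := u) (y := y) hy' hsum'
  -- products
  have hs1 := summable_mul_of_summable_norm nC nD2
  have hs2 := summable_mul_of_summable_norm nB nD3
  have hP1 := HasSum.mul hC hD2 hs1
  have hP2 := HasSum.mul hB hD3 hs2
  have hQ := ((auxTripleEquiv.hasSum_iff.mpr hP1).add
    (auxTripleEquiv.hasSum_iff.mpr hP2)).mul_left (y ^ (-2 : ℤ))
  apply hQ.congr_fun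
  intro t
  obtain ⟨a, b, k⟩ := t
  show ((b : ℂ) + 1) * ((k : ℂ) + a + b + 3) *
            Complex.Gamma ((k : ℂ) + a + 2) /
            (Complex.Gamma ((a : ℂ) + 1) * Complex.Gamma ((k : ℂ) + 1)) *
          y ^ ((k : ℤ) - 2) * u ^ a * v ^ b = _
  have hGa : Complex.Gamma ((a : ℂ) + 1) = (a.factorial : ℂ) := Complex.Gamma_nat_eq_factorial a
  have hGk : Complex.Gamma ((k : ℂ) + 1) = (k.factorial : ℂ) := Complex.Gamma_nat_eq_factorial k
  have hGka : Complex.Gamma ((k : ℂ) + a + 2) = ((k + a + 1).factorial : ℂ) := by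
    rw [show ((k : ℂ) + a + 2) = (((k + a + 1 : ℕ)) : ℂ) + 1 by push_cast; ring]
    exact Complex.Gamma_nat_eq_factorial (k + a + 1)
  have hy2 : y ^ ((k : ℤ) - 2) = y ^ k * y ^ (-2 : ℤ) := by
    rw [zpow_sub₀ hy0, zpow_natCast, div_eq_mul_inv, ← zpow_neg]
  have hk1 : (k.factorial : ℂ) ≠ 0 := Nat.cast_ne_zero.mpr (Nat.factorial_ne_zero k)
  have ha1 : (a.factorial : ℂ) ≠ 0 := Nat.cast_ne_zero.mpr (Nat.factorial_ne_zero a)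
  have hA1 : ((a : ℂ)) + 1 ≠ 0 := Nat.cast_add_one_ne_zero a
  have hA2 : ((a : ℂ)) + 2 ≠ 0 := by
    intro h
    rw [show ((a : ℂ) + 2) = (((a + 2 : ℕ)) : ℂ) by push_cast; ring] at h
    exact (show a + 2 ≠ 0 by omega) (Nat.cast_eq_zero.mp h)
  have hn1 : (k + (a + 1)).choose (a + 1) * k.factorial * ((a + 1) * a.factorial) =
      (k + a + 1).factorial := by
    rw [← Nat.factorial_succ]
    exact Nat.add_choose_mul_factorial_mul_factorial k (a + 1)
  have hn2 : (k + (a + 2)).choose (a + 2) * k.factorial *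
      ((a + 2) * ((a + 1) * a.factorial)) = (k + a + 2) * (k + a + 1).factorial := by
    rw [← Nat.factorial_succ, ← Nat.factorial_succ, ← Nat.factorial_succ]
    exact Nat.add_choose_mul_factorial_mul_factorial k (a + 2)
  have hc1 : (((k + (a + 1)).choose (a + 1) : ℕ) : ℂ) * (k.factorial : ℂ) *
      (((a : ℂ) + 1) * (a.factorial : ℂ)) = ((k + a + 1).factorial : ℂ) := by
    exact_mod_cast hn1
  have hc2 : (((k + (a + 2)).choose (a + 2) : ℕ) : ℂ) * (k.factorial : ℂ) *
      (((a : ℂ) + 2) * (((a : ℂ) + 1) * (a.factorial : ℂ))) =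
      ((k : ℂ) + a + 2) * ((k + a + 1).factorial : ℂ) := by
    exact_mod_cast hn2
  have hden : (a.factorial : ℂ) * (k.factorial : ℂ) ≠ 0 := mul_ne_zero ha1 hk1
  simp only [auxTripleEquiv, Equiv.coe_fn_mk, Function.comp]
  rw [hGa, hGk, hGka, hy2]
  rw [div_mul_eq_mul_div, div_mul_eq_mul_div, div_mul_eq_mul_div, div_eq_iff hden]
  linear_combination (-(((b : ℂ) + 1) ^ 2 * y ^ (-2 : ℤ) * v ^ b * u ^ a * y ^ k)) * hc1 +
    (-(((b : ℂ) + 1) * y ^ (-2 : ℤ) * v ^ b * u ^ a * y ^ k)) * hc2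
end
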